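/- Let G be a group, H a subgroup, Δ a G-set such that H fixes some point of Δ, and M an H-module. Then the induced module Ind_H^G M is Δ-projective, i.e., a direct summand of a module of the form N ⊗ ℤΔ for some G-module N. -/

import Mathlib

open TensorProduct

variable (G : Type) [Group G]

/-- The permutation representation on `H →₀ k` (the old meaning of `Representation.ofMulAction`). -/
noncomputable def finsuppOfMulAction (k G H : Type*) [CommSemiring k] [Monoid G] [MulAction G H] :
    Representation k G (H →₀ k) where
  toFun g := Finsupp.lmapDomain k k (g • ·)
  map_one' := by ext; simp
  map_mul' x y := by ext; simp [mul_smul]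

@[simp]
lemma finsuppOfMulAction_single (k G H : Type*) [CommSemiring k] [Monoid G] [MulAction G H]
    (g : G) (x : H) (r : k) :
    finsuppOfMulAction k G H g (Finsupp.single x r) = Finsupp.single (g • x) r := by
  simp [finsuppOfMulAction]

/-- The representation of `G` on `ℤG ⊗ M` by left translation on the first factor. -/
noncomputable def freeRep (M : Type) [AddCommGroup M] [Module ℤ M] :
    Representation ℤ G ((G →₀ ℤ) ⊗[ℤ] M) where
  toFun g := LinearMap.rTensor M (finsuppOfMulAction ℤ G G g)
  map_one' := by
    exact (congrArg (LinearMap.rTensor M) (map_one _)).trans (LinearMap.rTensor_id M _)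
  map_mul' g₁ g₂ := by
    exact (congrArg (LinearMap.rTensor M) (map_mul _ _ _)).trans (LinearMap.rTensor_mul M _ _)

/-- The submodule of relations `gh ⊗ m - g ⊗ h·m` defining the induced module
`Ind_H^G M = ℤG ⊗_{ℤH} M` as a quotient of `ℤG ⊗_ℤ M`. -/
noncomputable def indRel (H : Subgroup G) (M : Type) [AddCommGroup M] [Module ℤ M]
    (ρM : Representation ℤ H M) : Submodule ℤ ((G →₀ ℤ) ⊗[ℤ] M) :=
  Submodule.span ℤ {x | ∃ (g : G) (h : H) (m : M),
    x = Finsupp.single (g * (h : G)) (1 : ℤ) ⊗ₜ[ℤ] m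
      - Finsupp.single g (1 : ℤ) ⊗ₜ[ℤ] (ρM h m)}

lemma freeRep_mapsTo (H : Subgroup G) (M : Type) [AddCommGroup M] [Module ℤ M]
    (ρM : Representation ℤ H M) (g : G) :
    indRel G H M ρM ≤ (indRel G H M ρM).comap (freeRep G M g) := by
  rw [indRel, Submodule.span_le]
  rintro x ⟨a, h, m, rfl⟩
  have heq : (freeRep G M g) (Finsupp.single (a * (h : G)) (1 : ℤ) ⊗ₜ[ℤ] m
        - Finsupp.single a (1 : ℤ) ⊗ₜ[ℤ] (ρM h m))
      = Finsupp.single (g * (a * (h : G))) (1 : ℤ) ⊗ₜ[ℤ] m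
        - Finsupp.single (g * a) (1 : ℤ) ⊗ₜ[ℤ] (ρM h m) := by
    show LinearMap.rTensor M (finsuppOfMulAction ℤ G G g) _ = _
    simp only [freeRep, MonoidHom.coe_mk, OneHom.coe_mk, map_sub, LinearMap.rTensor_tmul,
      finsuppOfMulAction_single, smul_eq_mul]
  simp only [SetLike.mem_coe, Submodule.mem_comap, heq]
  exact Submodule.subset_span ⟨g * a, h, m, by rw [mul_assoc]⟩

/-- The induced module `Ind_H^G M = ℤG ⊗_{ℤH} M`, as a `G`-representation. -/
noncomputable def indRep (H : Subgroup G) (M : Type) [AddCommGroup M] [Module ℤ M]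
    (ρM : Representation ℤ H M) :
    Representation ℤ G ((((G →₀ ℤ) ⊗[ℤ] M)) ⧸ indRel G H M ρM) where
  toFun g := Submodule.mapQ _ _ (freeRep G M g) (freeRep_mapsTo G H M ρM g)
  map_one' := by
    apply Submodule.linearMap_qext
    ext v
    simp [Submodule.mapQ_apply]
    rfl
  map_mul' g₁ g₂ := by
    apply Submodule.linearMap_qext
    ext v
    simp [Submodule.mapQ_apply, map_mul]
    rfl

/-- A `G`-module `M` (given by a representation `ρM`) is `Δ`-projective if it is an
equivariant direct summand of `N ⊗ ℤΔ` (diagonal `G`-action) for some `G`-module `N`. -/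
def IsDeltaProjective (Δ : Type) [MulAction G Δ]
    (M : Type) [AddCommGroup M] [Module ℤ M] (ρM : Representation ℤ G M) : Prop :=
  ∃ (N : ModuleCat.{0} ℤ) (ρN : Representation ℤ G N)
    (i : M →ₗ[ℤ] N ⊗[ℤ] (Δ →₀ ℤ)) (r : N ⊗[ℤ] (Δ →₀ ℤ) →ₗ[ℤ] M),
      (∀ g : G, i ∘ₗ ρM g = ((ρN.tprod (finsuppOfMulAction ℤ G Δ)) g : N ⊗[ℤ] (Δ →₀ ℤ) →ₗ[ℤ] N ⊗[ℤ] (Δ →₀ ℤ)) ∘ₗ i) ∧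
      (∀ g : G, r ∘ₗ ((ρN.tprod (finsuppOfMulAction ℤ G Δ)) g : N ⊗[ℤ] (Δ →₀ ℤ) →ₗ[ℤ] N ⊗[ℤ] (Δ →₀ ℤ)) = ρM g ∘ₗ r) ∧
      r ∘ₗ i = LinearMap.id

/-- If `H` fixes a point of the `G`-set `Δ` and `M` is an `H`-module, then the induced
module `Ind_H^G M` is `Δ`-projective. -/
theorem stmt11 (H : Subgroup G) (Δ : Type) [MulAction G Δ]
    (hfix : ∃ δ : Δ, ∀ h ∈ H, h • δ = δ)
    (M : Type) [AddCommGroup M] [Module ℤ M] (ρM : Representation ℤ H M) :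
    IsDeltaProjective G Δ (((G →₀ ℤ) ⊗[ℤ] M) ⧸ indRel G H M ρM) (indRep G H M ρM) := by
  obtain ⟨δ, hδ⟩ := hfix
  set Q := ((G →₀ ℤ) ⊗[ℤ] M) ⧸ indRel G H M ρM with hQ
  set π := (indRel G H M ρM).mkQ with hπ
  -- the map φ : ℤG ⊗ M → Q ⊗ ℤΔ,  single g 1 ⊗ m ↦ π(single g 1 ⊗ m) ⊗ single (g•δ) 1
  set f : G → M →ₗ[ℤ] Q ⊗[ℤ] (Δ →₀ ℤ) := fun g =>
    ((TensorProduct.mk ℤ Q (Δ →₀ ℤ)).flip (Finsupp.single (g • δ) 1)) ∘ₗ π ∘ₗ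
      (TensorProduct.mk ℤ (G →₀ ℤ) M (Finsupp.single g 1)) with hf
  set φ : (G →₀ ℤ) ⊗[ℤ] M →ₗ[ℤ] Q ⊗[ℤ] (Δ →₀ ℤ) :=
    TensorProduct.lift ((Finsupp.lift (M →ₗ[ℤ] Q ⊗[ℤ] (Δ →₀ ℤ)) ℤ G) f) with hφ
  have hφ_single : ∀ (g : G) (m : M),
      φ (Finsupp.single g 1 ⊗ₜ[ℤ] m) = π (Finsupp.single g 1 ⊗ₜ[ℤ] m) ⊗ₜ[ℤ] Finsupp.single (g • δ) 1 := by
    intro g m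
    rw [hφ]
    erw [TensorProduct.lift.tmul]
    simp [hf]
    rfl
  have hker : indRel G H M ρM ≤ LinearMap.ker φ := by
    unfold indRel
    rw [Submodule.span_le]
    rintro x ⟨g, h, m, rfl⟩
    have h1 : π (Finsupp.single (g * (h : G)) (1 : ℤ) ⊗ₜ[ℤ] m)
        = π (Finsupp.single g (1 : ℤ) ⊗ₜ[ℤ] (ρM h m)) := by
      rw [hπ, ← sub_eq_zero, ← map_sub, Submodule.mkQ_apply, Submodule.Quotient.mk_eq_zero]
      exact Submodule.subset_span ⟨g, h, m, rfl⟩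
    have h2 : (g * (h : G)) • δ = g • δ := by
      rw [mul_smul, hδ h h.2]
    simp only [SetLike.mem_coe, LinearMap.mem_ker, map_sub, hφ_single, h1, h2, sub_self]
    change φ _ = 0
    rw [map_sub, hφ_single, hφ_single, h1, h2, sub_self]
  set i : Q →ₗ[ℤ] Q ⊗[ℤ] (Δ →₀ ℤ) := Submodule.liftQ _ φ hker with hi
  -- augmentation
  set ε : (Δ →₀ ℤ) →ₗ[ℤ] ℤ := Finsupp.lsum ℤ (fun _ => LinearMap.id) with hε
  set r : Q ⊗[ℤ] (Δ →₀ ℤ) →ₗ[ℤ] Q :=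
    (TensorProduct.rid ℤ Q).toLinearMap ∘ₗ LinearMap.lTensor Q ε with hr
  have hr_tmul : ∀ (q : Q) (d : Δ), r (q ⊗ₜ[ℤ] Finsupp.single d 1) = q := by
    intro q d
    show (TensorProduct.rid ℤ Q) (LinearMap.lTensor Q ε (q ⊗ₜ[ℤ] Finsupp.single d 1)) = q
    rw [LinearMap.lTensor_tmul]
    simp [hε]
  refine ⟨ModuleCat.of ℤ Q, indRep G H M ρM, i, r, ?_, ?_, ?_⟩
  · intro g
    apply Submodule.linearMap_qext
    ext g' m
    have h1 : (indRep G H M ρM) g (π (Finsupp.single g' 1 ⊗ₜ[ℤ] m))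
        = π (Finsupp.single (g * g') 1 ⊗ₜ[ℤ] m) := by
      simp only [indRep, hπ, Submodule.mkQ_apply, MonoidHom.coe_mk, OneHom.coe_mk, Submodule.mapQ_apply]
      congr 1
      show LinearMap.rTensor M (finsuppOfMulAction ℤ G G g) _ = _
      simp
    simp only [LinearMap.comp_apply, LinearMap.compr₂_apply, TensorProduct.mk_apply,
      Submodule.mkQ_apply, ← hπ]
    have hiπ : ∀ x, i (π x) = φ x := fun x => Submodule.liftQ_apply _ φ x
    simp only [TensorProduct.AlgebraTensorModule.curry_apply, TensorProduct.curry_apply, LinearMap.restrictScalars_apply, LinearMap.coe_comp, Function.comp_apply,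
      LinearMap.coe_restrictScalars, Finsupp.lsingle_apply]
    show i (indRep G H M ρM g (π (Finsupp.single g' 1 ⊗ₜ[ℤ] m))) = (indRep G H M ρM).tprod (finsuppOfMulAction ℤ G Δ) g (i (π (Finsupp.single g' 1 ⊗ₜ[ℤ] m)))
    rw [h1]
    erw [hiπ, hiπ]
    rw [hφ_single, hφ_single, Representation.tprod_apply, TensorProduct.map_tmul,
      finsuppOfMulAction_single]
    erw [h1]
    rw [mul_smul]
  · intro g
    ext q d d'
    simp only [TensorProduct.AlgebraTensorModule.curry_apply, TensorProduct.curry_apply, LinearMap.restrictScalars_apply, LinearMap.coe_comp, Function.comp_apply,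
      LinearMap.coe_restrictScalars, Finsupp.lsingle_apply, Representation.tprod_apply,
      TensorProduct.map_tmul, finsuppOfMulAction_single, smul_eq_mul]
    show r ((indRep G H M ρM).tprod (finsuppOfMulAction ℤ G Δ) g (π (Finsupp.single q 1 ⊗ₜ[ℤ] d) ⊗ₜ[ℤ] Finsupp.single d' 1)) = indRep G H M ρM g (r (π (Finsupp.single q 1 ⊗ₜ[ℤ] d) ⊗ₜ[ℤ] Finsupp.single d' 1))
    erw [Representation.tprod_apply, TensorProduct.map_tmul, finsuppOfMulAction_single]
    erw [hr_tmul, hr_tmul]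
  · apply Submodule.linearMap_qext
    ext g m
    have hiπ : ∀ x, i (π x) = φ x := fun x => Submodule.liftQ_apply _ φ x
    simp only [TensorProduct.AlgebraTensorModule.curry_apply, TensorProduct.curry_apply, LinearMap.restrictScalars_apply, LinearMap.coe_comp, Function.comp_apply,
      LinearMap.coe_restrictScalars, Finsupp.lsingle_apply, Submodule.mkQ_apply, ← hπ,
      LinearMap.id_coe, id_eq]
    show r (i (π (Finsupp.single g 1 ⊗ₜ[ℤ] m))) = π (Finsupp.single g 1 ⊗ₜ[ℤ] m)
    erw [hiπ]
    rw [hφ_single]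
    erw [hr_tmul]
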